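/- For every permutation p of {1,…,n} (acting on ℝ^n by permuting coordinates) and every integer vector v ∈ ℤ^n, the orthogonal projection w of v onto the fixed space Eig(p,1) = {x ∈ ℝ^n : p·x = x} satisfies n!·w ∈ ℤ^n. (Consequently the length functions l_1,…,l_{n−1} are integer-valued on G = (ℤ^n/Δ_ℤ) ⋊ Per(n).) -/

import Mathlib

noncomputable section

/-- Permutation of coordinates as a linear automorphism of Euclidean `ℝ^n`:
`(p • x) i = x (p⁻¹ i)`. -/
def permEuc (n : ℕ) (p : Equiv.Perm (Fin n)) :
    EuclideanSpace ℝ (Fin n) ≃ₗ[ℝ] EuclideanSpace ℝ (Fin n) :=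
  ((WithLp.linearEquiv 2 ℝ (Fin n → ℝ)).trans
    (LinearEquiv.funCongrLeft ℝ ℝ p.symm)).trans
    (WithLp.linearEquiv 2 ℝ (Fin n → ℝ)).symm

/-- The fixed space `Eig(p,1) = {x ∈ ℝ^n : p·x = x}` of a coordinate permutation. -/
def fixedSubmodule (n : ℕ) (p : Equiv.Perm (Fin n)) :
    Submodule ℝ (EuclideanSpace ℝ (Fin n)) :=
  LinearMap.ker ((LinearMap.id : EuclideanSpace ℝ (Fin n) →ₗ[ℝ] _) - (permEuc n p).toLinearMap)

lemma permEuc_apply (n : ℕ) (p : Equiv.Perm (Fin n)) (x : EuclideanSpace ℝ (Fin n)) (i : Fin n) :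
    (permEuc n p x) i = x (p⁻¹ i) := rfl

lemma mem_fixed_iff (n : ℕ) (p : Equiv.Perm (Fin n)) (x : EuclideanSpace ℝ (Fin n)) :
    x ∈ fixedSubmodule n p ↔ ∀ i, x (p⁻¹ i) = x i := by
  simp only [fixedSubmodule, LinearMap.mem_ker, LinearMap.sub_apply, LinearMap.id_apply,
    LinearEquiv.coe_coe, sub_eq_zero]
  constructor
  · intro h i
    have h' : x i = (permEuc n p) x i := by rw [← h]
    exact h'.symm
  · intro h
    refine PiLp.ext fun i => ?_
    rw [permEuc_apply, h]

lemma fixed_pow (n : ℕ) (p : Equiv.Perm (Fin n)) (x : EuclideanSpace ℝ (Fin n))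
    (hx : x ∈ fixedSubmodule n p) : ∀ (z : ℤ) (i : Fin n), x ((p ^ z) i) = x i := by
  rw [mem_fixed_iff] at hx
  have hp : ∀ i, x (p i) = x i := by
    intro i
    have h2 := hx (p i)
    rw [show p⁻¹ (p i) = i from p.symm_apply_apply i] at h2
    exact h2.symm
  intro z
  induction z using Int.induction_on with
  | zero =>
      intro i
      have : (p ^ (0:ℤ)) i = i := by rw [zpow_zero]; rfl
      rw [this]
  | succ k ih =>
      intro i
      have h3 : (p ^ ((k : ℤ) + 1)) i = (p ^ (k : ℤ)) (p i) := by
        rw [zpow_add_one, Equiv.Perm.mul_apply]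
      rw [h3, ih (p i), hp]
  | pred k ih =>
      intro i
      have h3 : (p ^ (-(k : ℤ) - 1)) i = (p ^ (-(k : ℤ))) (p⁻¹ i) := by
        rw [zpow_sub_one, Equiv.Perm.mul_apply]
      rw [h3, ih (p⁻¹ i), hx]

/-- the orthogonal projection `w` of an integer vector `v ∈ ℤ^n` onto the
fixed space of a coordinate permutation satisfies `n! · w ∈ ℤ^n`. -/
theorem factorial_smul_orthogonalProjection_int (n : ℕ) (p : Equiv.Perm (Fin n))
    (v : Fin n → ℤ) :
    ∀ i : Fin n, ∃ m : ℤ,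
      (n.factorial : ℝ) *
        ((Submodule.orthogonalProjectionOnto (fixedSubmodule n p)
          ((WithLp.linearEquiv 2 ℝ (Fin n → ℝ)).symm (fun j => (v j : ℝ))) :
            EuclideanSpace ℝ (Fin n)) i) = (m : ℝ) := by
  classical
  set H := Subgroup.zpowers p with hH
  set k := Fintype.card H with hk
  have hk0 : (k : ℝ) ≠ 0 := Nat.cast_ne_zero.2 Fintype.card_ne_zero
  -- the averaged function
  have hSperm : ∀ i, (∑ q : H, (v ((q : Equiv.Perm (Fin n)) (p⁻¹ i)) : ℝ))
      = ∑ q : H, (v ((q : Equiv.Perm (Fin n)) i) : ℝ) := by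
    intro i
    set pH : H := ⟨p, Subgroup.mem_zpowers p⟩ with hpH
    have := Equiv.sum_comp (Equiv.mulRight pH⁻¹)
      (fun q : H => (v ((q : Equiv.Perm (Fin n)) i) : ℝ))
    rw [← this]
    apply Finset.sum_congr rfl
    intro q _
    simp only [Equiv.coe_mulRight]
    congr 1
  let wf : Fin n → ℝ := fun i => (k : ℝ)⁻¹ * ∑ q : H, (v ((q : Equiv.Perm (Fin n)) i) : ℝ)
  set w : EuclideanSpace ℝ (Fin n) := (WithLp.linearEquiv 2 ℝ (Fin n → ℝ)).symm wf with hw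
  set vR : EuclideanSpace ℝ (Fin n) :=
    (WithLp.linearEquiv 2 ℝ (Fin n → ℝ)).symm (fun j => (v j : ℝ)) with hvR
  have hwapp : ∀ i, w i = (k : ℝ)⁻¹ * ∑ q : H, (v ((q : Equiv.Perm (Fin n)) i) : ℝ) :=
    fun i => rfl
  have hvapp : ∀ i, vR i = (v i : ℝ) := fun i => rfl
  have hmem : w ∈ fixedSubmodule n p := by
    rw [mem_fixed_iff]
    intro i
    rw [hwapp, hwapp, hSperm]
  have hproj : (Submodule.orthogonalProjectionOnto (fixedSubmodule n p) vR : EuclideanSpace ℝ (Fin n)) = w := by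
    apply Submodule.eq_starProjection_of_mem_of_inner_eq_zero hmem
    intro u hu
    have hinner : (inner ℝ (vR - w) u : ℝ) = ∑ i, (vR i - w i) * u i := by
      simp [PiLp.inner_apply, RCLike.inner_apply, mul_comm]
    rw [hinner]
    have hufix : ∀ (q : H) (i : Fin n), u ((q : Equiv.Perm (Fin n)) i) = u i := by
      rintro ⟨q, hq⟩ i
      obtain ⟨z, rfl⟩ := hq
      exact fixed_pow n p u hu z i
    have key : ∑ i, w i * u i = ∑ i, vR i * u i := by
      have h1 : ∀ i, w i * u i
          = (k : ℝ)⁻¹ * ∑ q : H, (v ((q : Equiv.Perm (Fin n)) i) : ℝ) * u i := by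
        intro i
        rw [hwapp, mul_assoc, Finset.sum_mul]
      have h2 : ∀ q : H, ∑ i, (v ((q : Equiv.Perm (Fin n)) i) : ℝ) * u i
          = ∑ i, (v i : ℝ) * u i := by
        intro q
        calc ∑ i, (v ((q : Equiv.Perm (Fin n)) i) : ℝ) * u i
            = ∑ i, (v ((q : Equiv.Perm (Fin n)) i) : ℝ) * u ((q : Equiv.Perm (Fin n)) i) := by
              apply Finset.sum_congr rfl
              intro i _
              rw [hufix]
          _ = ∑ i, (v i : ℝ) * u i :=
              Equiv.sum_comp (q : Equiv.Perm (Fin n)) (fun j => (v j : ℝ) * u j)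
      calc ∑ i, w i * u i
          = (k : ℝ)⁻¹ * ∑ i, ∑ q : H, (v ((q : Equiv.Perm (Fin n)) i) : ℝ) * u i := by
            rw [Finset.mul_sum]
            exact Finset.sum_congr rfl fun i _ => h1 i
        _ = (k : ℝ)⁻¹ * ∑ q : H, ∑ i, (v ((q : Equiv.Perm (Fin n)) i) : ℝ) * u i := by
            rw [Finset.sum_comm]
        _ = (k : ℝ)⁻¹ * ∑ _q : H, ∑ i, (v i : ℝ) * u i := by
            rw [Finset.sum_congr rfl fun q _ => h2 q]
        _ = (k : ℝ)⁻¹ * (k * ∑ i, (v i : ℝ) * u i) := by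
            rw [Finset.sum_const, Finset.card_univ, ← hk, nsmul_eq_mul]
        _ = ∑ i, (vR i : ℝ) * u i := by
            rw [← mul_assoc, inv_mul_cancel₀ hk0, one_mul]
            exact Finset.sum_congr rfl fun i _ => by rw [hvapp]
    have hsub : ∑ i, (vR i - w i) * u i = ∑ i, vR i * u i - ∑ i, w i * u i := by
      rw [← Finset.sum_sub_distrib]
      exact Finset.sum_congr rfl fun i _ => by ring
    rw [hsub, key, sub_self]
  intro i
  have hdvd : k ∣ n.factorial := by
    have h1 := Subgroup.card_subgroup_dvd_card H
    rwa [Nat.card_eq_fintype_card, Nat.card_eq_fintype_card, Fintype.card_perm,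
      Fintype.card_fin] at h1
  obtain ⟨c, hc⟩ := hdvd
  refine ⟨c * ∑ q : H, v ((q : Equiv.Perm (Fin n)) i), ?_⟩
  rw [hproj, hwapp, hc]
  push_cast
  field_simp
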